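/- arXiv:1705.06167 — 4 statements merged into one kernel-verified Lean document; each statement's English description precedes it below -/
import Mathlib

section
/- For all x > 0, Θ''(x+1) − Θ''(x) = p(x)/q(x) where Θ(x) = log Γ(x+1) − x·log x + x − (1/2)·log(2π) − (1/4)·log(x² + x/3 + 1/18), p(x) = 625 + 9816x + 42516x² + 63936x³ + 38556x⁴ + 7776x⁵, and q(x) = x(1+x)²(1+6x+18x²)²(25+42x+18x²)². -/
open Real Topology Filter

noncomputable def Θ (x : ℝ) : ℝ :=
  Real.log (Real.Gamma (x + 1)) - x * Real.log x + x
    - (1/2) * Real.log (2 * Real.pi) - (1/4) * Real.log (x^2 + x/3 + 1/18)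

noncomputable def Qf (y : ℝ) : ℝ := y^2 + y/3 + 1/18

lemma Qf_pos (y : ℝ) : 0 < Qf y := by unfold Qf; nlinarith [sq_nonneg (y + 1/6)]

noncomputable def gg (y : ℝ) : ℝ :=
  y * Real.log y - y * Real.log (y+1) + 1 - (1/4) * Real.log (Qf (y+1)) + (1/4) * Real.log (Qf y)

noncomputable def g1 (y : ℝ) : ℝ :=
  Real.log y - Real.log (y+1) + 1/(y+1)
    - (1/4) * ((2*(y+1)+1/3) / Qf (y+1)) + (1/4) * ((2*y+1/3) / Qf y)

noncomputable def g2 (y : ℝ) : ℝ :=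
  1/y - 1/(y+1) - 1/(y+1)^2
    - (1/4) * ((2 * Qf (y+1) - (2*(y+1)+1/3)^2) / (Qf (y+1))^2)
    + (1/4) * ((2 * Qf y - (2*y+1/3)^2) / (Qf y)^2)

lemma hasDerivAt_Qf (y : ℝ) : HasDerivAt Qf (2*y + 1/3) y := by
  have h := ((hasDerivAt_pow 2 y).add ((hasDerivAt_id y).div_const 3)).add_const (1/18 : ℝ)
  refine h.congr_deriv ?_
  norm_num

lemma hasDerivAt_shift1 (y : ℝ) : HasDerivAt (fun z : ℝ => z + 1) 1 y :=
  (hasDerivAt_id y).add_const 1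

lemma hasDerivAt_gg {y : ℝ} (hy : 0 < y) : HasDerivAt gg (g1 y) y := by
  have hy1 : (0:ℝ) < y + 1 := by linarith
  have hQ := Qf_pos y
  have hQ1 := Qf_pos (y+1)
  have h1 : HasDerivAt (fun z : ℝ => z * Real.log z) (1 * Real.log y + y * y⁻¹) y :=
    (hasDerivAt_id y).mul (Real.hasDerivAt_log hy.ne')
  have hlog1 : HasDerivAt (fun z : ℝ => Real.log (z+1)) ((y+1)⁻¹ * 1) y :=
    by have := (Real.hasDerivAt_log hy1.ne').comp y (hasDerivAt_shift1 y); exact this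
  have h2 : HasDerivAt (fun z : ℝ => z * Real.log (z+1))
      (1 * Real.log (y+1) + y * ((y+1)⁻¹ * 1)) y :=
    (hasDerivAt_id y).mul hlog1
  have hQ1' : HasDerivAt (fun z : ℝ => Qf (z+1)) ((2*(y+1)+1/3) * 1) y :=
    by have := (hasDerivAt_Qf (y+1)).comp y (hasDerivAt_shift1 y); exact this
  have h3 : HasDerivAt (fun z : ℝ => Real.log (Qf (z+1)))
      ((Qf (y+1))⁻¹ * ((2*(y+1)+1/3) * 1)) y :=
    by have := (Real.hasDerivAt_log hQ1.ne').comp y hQ1'; exact this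
  have h4 : HasDerivAt (fun z : ℝ => Real.log (Qf z)) ((Qf y)⁻¹ * (2*y+1/3)) y :=
    (Real.hasDerivAt_log hQ.ne').comp y (hasDerivAt_Qf y)
  have H := (((h1.sub h2).add_const 1).sub (h3.const_mul (1/4 : ℝ))).add
    (h4.const_mul (1/4 : ℝ))
  refine H.congr_deriv ?_
  unfold g1
  field_simp
  ring

lemma hasDerivAt_g1 {y : ℝ} (hy : 0 < y) : HasDerivAt g1 (g2 y) y := by
  have hy1 : (0:ℝ) < y + 1 := by linarith
  have hQ := Qf_pos y
  have hQ1 := Qf_pos (y+1)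
  have h1 := Real.hasDerivAt_log hy.ne'
  have hlog1 : HasDerivAt (fun z : ℝ => Real.log (z+1)) ((y+1)⁻¹ * 1) y :=
    by have := (Real.hasDerivAt_log hy1.ne').comp y (hasDerivAt_shift1 y); exact this
  have h2 : HasDerivAt (fun z : ℝ => 1/(z+1))
      ((0 * (y+1) - 1 * 1) / (y+1)^2) y :=
    (hasDerivAt_const y (1:ℝ)).div (hasDerivAt_shift1 y) hy1.ne'
  have hQ1' : HasDerivAt (fun z : ℝ => Qf (z+1)) ((2*(y+1)+1/3) * 1) y :=
    by have := (hasDerivAt_Qf (y+1)).comp y (hasDerivAt_shift1 y); exact this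
  have hn1 : HasDerivAt (fun z : ℝ => 2*(z+1)+1/3) (2 * 1) y :=
    ((hasDerivAt_shift1 y).const_mul 2).add_const (1/3 : ℝ)
  have h3 : HasDerivAt (fun z : ℝ => (2*(z+1)+1/3) / Qf (z+1))
      ((2 * 1 * Qf (y+1) - (2*(y+1)+1/3) * ((2*(y+1)+1/3) * 1)) / (Qf (y+1))^2) y :=
    hn1.div hQ1' hQ1.ne'
  have hn2 : HasDerivAt (fun z : ℝ => 2*z+1/3) (2 * 1) y :=
    ((hasDerivAt_id y).const_mul 2).add_const (1/3 : ℝ)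
  have h4 : HasDerivAt (fun z : ℝ => (2*z+1/3) / Qf z)
      ((2 * 1 * Qf y - (2*y+1/3) * (2*y+1/3)) / (Qf y)^2) y :=
    hn2.div (hasDerivAt_Qf y) hQ.ne'
  have H := (((h1.sub hlog1).add h2).sub (h3.const_mul (1/4 : ℝ))).add
    (h4.const_mul (1/4 : ℝ))
  refine H.congr_deriv ?_
  unfold g2
  field_simp
  ring

lemma contDiffAt_Gamma2 {y : ℝ} (hy : 0 < y) : ContDiffAt ℝ 2 Real.Gamma y := by
  have hopen : IsOpen {s : ℂ | 0 < s.re} := isOpen_lt continuous_const Complex.continuous_re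
  have h1 : AnalyticOnNhd ℂ Complex.Gamma {s : ℂ | 0 < s.re} := by
    refine DifferentiableOn.analyticOnNhd (fun s hs => ?_) hopen
    refine (Complex.differentiableAt_Gamma s fun m => ?_).differentiableWithinAt
    intro h
    rw [h] at hs
    simp only [Set.mem_setOf_eq, Complex.neg_re, Complex.natCast_re] at hs
    have : (0:ℝ) ≤ m := m.cast_nonneg
    linarith
  have ha : AnalyticAt ℂ Complex.Gamma ((y : ℝ) : ℂ) := h1 _ (by simpa using hy)
  have h2 : ContDiffAt ℝ 2 (fun t : ℝ => (Complex.Gamma (t : ℂ)).re) y := by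
    exact (Complex.reCLM.contDiff.contDiffAt).comp _
      ((ha.contDiffAt.restrict_scalars ℝ).comp _ Complex.ofRealCLM.contDiff.contDiffAt)
  have heq : Real.Gamma = fun t : ℝ => (Complex.Gamma (t : ℂ)).re := by
    funext t; rw [Complex.Gamma_ofReal, Complex.ofReal_re]
  rw [heq]; exact h2

lemma contDiffOn_Θ : ContDiffOn ℝ 2 Θ (Set.Ioi 0) := by
  intro y hy
  have hy' : (0:ℝ) < y := hy
  have hy1 : (0:ℝ) < y + 1 := by linarith
  apply ContDiffAt.contDiffWithinAt
  have hG : ContDiffAt ℝ 2 (fun z : ℝ => Real.log (Real.Gamma (z+1))) y := by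
    have h0 : ContDiffAt ℝ 2 (fun z : ℝ => z + 1) y :=
      (contDiff_id.add contDiff_const).contDiffAt
    have h1 : ContDiffAt ℝ 2 Real.Gamma (y+1) := contDiffAt_Gamma2 hy1
    have h2 : ContDiffAt ℝ 2 Real.log (Real.Gamma (y+1)) :=
      Real.contDiffAt_log.mpr (Real.Gamma_pos_of_pos hy1).ne'
    exact h2.comp y (h1.comp y h0)
  have hxlog : ContDiffAt ℝ 2 (fun z : ℝ => z * Real.log z) y :=
    contDiffAt_id.mul (Real.contDiffAt_log.mpr hy'.ne')
  have hQlog : ContDiffAt ℝ 2 (fun z : ℝ => Real.log (z^2 + z/3 + 1/18)) y := by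
    have hpoly : ContDiffAt ℝ 2 (fun z : ℝ => z^2 + z/3 + 1/18) y :=
      (((contDiff_id.pow 2).add (contDiff_id.div_const 3)).add contDiff_const).contDiffAt
    exact (Real.contDiffAt_log.mpr (Qf_pos y).ne').comp y hpoly
  exact ((((hG.sub hxlog).add contDiffAt_id).sub contDiffAt_const).sub
    (contDiffAt_const.mul hQlog))

theorem stmt_16 (x : ℝ) (hx : 0 < x) :
    deriv (deriv Θ) (x + 1) - deriv (deriv Θ) x =
      (625 + 9816*x + 42516*x^2 + 63936*x^3 + 38556*x^4 + 7776*x^5) /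
      (x * (1 + x)^2 * (1 + 6*x + 18*x^2)^2 * (25 + 42*x + 18*x^2)^2) := by
  have hx1 : (0:ℝ) < x + 1 := by linarith
  have hcd : ContDiffOn ℝ 2 Θ (Set.Ioi 0) := contDiffOn_Θ
  have hcd1 : ContDiffOn ℝ 1 (deriv Θ) (Set.Ioi 0) :=
    hcd.deriv_of_isOpen isOpen_Ioi (by norm_num)
  have hdiffΘ : ∀ y ∈ Set.Ioi (0:ℝ), DifferentiableAt ℝ Θ y := fun y hy =>
    (hcd.contDiffAt (isOpen_Ioi.mem_nhds hy)).differentiableAt (by norm_num)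
  have hdD : ∀ y ∈ Set.Ioi (0:ℝ), DifferentiableAt ℝ (deriv Θ) y := fun y hy =>
    (hcd1.contDiffAt (isOpen_Ioi.mem_nhds hy)).differentiableAt (by norm_num)
  have hshift : ∀ y : ℝ, 0 < y → Θ (y+1) = Θ y + gg y := by
    intro y hy
    have hy1 : (0:ℝ) < y + 1 := by linarith
    unfold Θ gg Qf
    rw [Real.Gamma_add_one hy1.ne',
      Real.log_mul hy1.ne' (Real.Gamma_pos_of_pos hy1).ne']
    ring_nf
  have hmem : Set.Ioi (0:ℝ) ∈ 𝓝 x := isOpen_Ioi.mem_nhds hx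
  have E1 : (fun y => Θ (y+1)) =ᶠ[𝓝 x] fun y => Θ y + gg y := by
    filter_upwards [hmem] with y hy using hshift y hy
  have E2 : deriv (fun y => Θ (y+1)) =ᶠ[𝓝 x] deriv (fun y => Θ y + gg y) := E1.deriv
  have E3 : (fun y => deriv Θ (y+1)) =ᶠ[𝓝 x] fun y => deriv Θ y + g1 y := by
    filter_upwards [hmem, E2] with y hy h2
    have hy' : (0:ℝ) < y := hy
    calc deriv Θ (y+1) = deriv (fun z => Θ (z+1)) y := (deriv_comp_add_const _ _ _).symm
      _ = deriv (fun z => Θ z + gg z) y := h2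
      _ = deriv Θ y + g1 y := by
          rw [deriv_fun_add (hdiffΘ y hy) (hasDerivAt_gg hy').differentiableAt,
            (hasDerivAt_gg hy').deriv]
  have E4 : deriv (fun y => deriv Θ (y+1)) x = deriv (fun y => deriv Θ y + g1 y) x :=
    E3.deriv_eq
  have L : deriv (fun y => deriv Θ (y+1)) x = deriv (deriv Θ) (x+1) :=
    deriv_comp_add_const _ _ _
  have R : deriv (fun y => deriv Θ y + g1 y) x = deriv (deriv Θ) x + g2 x := by
    rw [deriv_fun_add (hdD x hx) (hasDerivAt_g1 hx).differentiableAt, (hasDerivAt_g1 hx).deriv]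
  have key : deriv (deriv Θ) (x+1) - deriv (deriv Θ) x = g2 x := by
    rw [← L, E4, R]; ring
  rw [key]
  have hQ := Qf_pos x
  have hQ1 := Qf_pos (x+1)
  have e1 : (1 + 6*x + 18*x^2) = 18 * Qf x := by unfold Qf; ring
  have e2 : (25 + 42*x + 18*x^2) = 18 * Qf (x+1) := by unfold Qf; ring
  rw [e1, e2]
  unfold g2 Qf
  have h1x : (1:ℝ) + x ≠ 0 := by linarith
  have hx1' : (x:ℝ) + 1 ≠ 0 := hx1.ne'
  have hQ' : (x^2 + x/3 + 1/18 : ℝ) ≠ 0 := ne_of_gt (by nlinarith [sq_nonneg (x+1/6)])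
  have hQ1' : ((x+1)^2 + (x+1)/3 + 1/18 : ℝ) ≠ 0 :=
    ne_of_gt (by nlinarith [sq_nonneg (x+1+1/6)])
  field_simp
  ring
end

section
/- For every natural number n ≥ 1, β·n^n·e^{−n}·(n² + n/3 + 1/18)^{1/4} < n! ≤ √(2π)·n^n·e^{−n}·(n² + n/3 + 1/18)^{1/4}, where β = (e/√(2π))·(18/25)^{1/4}. -/
open Real Filter Topology Stirling
set_option maxHeartbeats 1600000

lemma logbound (t : ℝ) (h0 : 0 ≤ t) (h1 : t ≤ 1/2) :
    Real.log (1+t) ≤ t - t^2/2 + t^3/3 - t^4/4 + t^5/5 - t^6/6 + t^7/7 - t^8/8 + t^9/9 + 2*t^10 := by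
  have habs : |(-t)| < 1 := by rw [abs_neg, abs_of_nonneg h0]; linarith
  have h := Real.abs_log_sub_add_sum_range_le habs 9
  rw [abs_le] at h
  have h' := h.2
  simp only [Finset.sum_range_succ, Finset.sum_range_zero] at h'
  have habs2 : |(-t)| = t := by rw [abs_neg, abs_of_nonneg h0]
  rw [habs2] at h'
  have hden : (1:ℝ)/2 ≤ 1 - t := by linarith
  have htp : (0:ℝ) ≤ t^10 := by positivity
  have herr : t^10 / (1-t) ≤ 2*t^10 := by
    rw [div_le_iff₀ (by linarith : (0:ℝ) < 1 - t)]
    nlinarith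
  have : Real.log (1 - -t) ≤ t - t^2/2 + t^3/3 - t^4/4 + t^5/5 - t^6/6 + t^7/7 - t^8/8 + t^9/9 + t^10/(1-t) := by
    norm_num at h' ⊢
    linarith [h']
  rw [show (1:ℝ) - -t = 1 + t by ring] at this
  linarith

lemma keyineq (x p s : ℝ) (hx : 9 ≤ x) (hp : p = x^2+x/3+1/18) (hs : s = (2*x+4/3)/p) :
    s - s^2/2 + s^3/3 - s^4/4 + s^5/5 - s^6/6 + s^7/7 - s^8/8 + s^9/9 + 2*s^10 + 8/x^9
      ≤ 2/x - 4/(3*x^2) + 1/x^3 - 4/(5*x^4) + 2/(3*x^5) - 4/(7*x^6) + 1/(2*x^7) - 4/(9*x^8) := by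
  have hx0 : (0:ℝ) < x := by linarith
  have hp0 : (0:ℝ) < p := by rw [hp]; positivity
  have h9 : (0:ℝ) ≤ x - 9 := by linarith
  have hE : (0:ℝ) ≤ (2*x^8 - (4/3)*x^7 + x^6 - (4/5)*x^5 + (2/3)*x^4 - (4/7)*x^3 + (1/2)*x^2 - (4/9)*x)*p^10
      - ((2*x+4/3)*p^8 - (2*x+4/3)^2*p^7/2 + (2*x+4/3)^3*p^6/3 - (2*x+4/3)^4*p^5/4 + (2*x+4/3)^5*p^4/5
         - (2*x+4/3)^6*p^3/6 + (2*x+4/3)^7*p^2/7 - (2*x+4/3)^8*p/8 + (2*x+4/3)^9/9)*x^9*p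
      - 2*(2*x+4/3)^10*x^9 - 8*p^10 := by
    subst hp
    nlinarith [pow_nonneg h9 1, pow_nonneg h9 2, pow_nonneg h9 3, pow_nonneg h9 4, pow_nonneg h9 5, pow_nonneg h9 6, pow_nonneg h9 7, pow_nonneg h9 8, pow_nonneg h9 9, pow_nonneg h9 10, pow_nonneg h9 11, pow_nonneg h9 12, pow_nonneg h9 13, pow_nonneg h9 14, pow_nonneg h9 15, pow_nonneg h9 16, pow_nonneg h9 17, pow_nonneg h9 18, pow_nonneg h9 19, pow_nonneg h9 20, pow_nonneg h9 21, pow_nonneg h9 22, pow_nonneg h9 23, pow_nonneg h9 24, pow_nonneg h9 25]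
  rw [← sub_nonneg]
  have heq : (2/x - 4/(3*x^2) + 1/x^3 - 4/(5*x^4) + 2/(3*x^5) - 4/(7*x^6) + 1/(2*x^7) - 4/(9*x^8))
      - (s - s^2/2 + s^3/3 - s^4/4 + s^5/5 - s^6/6 + s^7/7 - s^8/8 + s^9/9 + 2*s^10 + 8/x^9)
      = ((2*x^8 - (4/3)*x^7 + x^6 - (4/5)*x^5 + (2/3)*x^4 - (4/7)*x^3 + (1/2)*x^2 - (4/9)*x)*p^10
      - ((2*x+4/3)*p^8 - (2*x+4/3)^2*p^7/2 + (2*x+4/3)^3*p^6/3 - (2*x+4/3)^4*p^5/4 + (2*x+4/3)^5*p^4/5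
         - (2*x+4/3)^6*p^3/6 + (2*x+4/3)^7*p^2/7 - (2*x+4/3)^8*p/8 + (2*x+4/3)^9/9)*x^9*p
      - 2*(2*x+4/3)^10*x^9 - 8*p^10) / (x^9 * p^10) := by
    subst hs
    field_simp
    ring
  rw [heq]
  exact div_nonneg hE (by positivity)

lemma core (n : ℕ) (hn : 1 ≤ n) :
    ((n:ℝ)+1)^(4*n) * (((n:ℝ)+1)^2 + ((n:ℝ)+1)/3 + 1/18)
      ≤ Real.exp 1 ^ 4 * ((n:ℝ)^(4*n) * ((n:ℝ)^2+(n:ℝ)/3+1/18)) := by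
  rcases le_or_gt n 8 with h8 | h8
  · have he : (2.7182818283:ℝ)^4 ≤ Real.exp 4 := by
      rw [show (4:ℝ) = ((4:ℕ):ℝ) by norm_num, ← Real.exp_one_pow]
      exact pow_le_pow_left₀ (by norm_num) Real.exp_one_gt_d9.le 4
    interval_cases n <;> norm_num <;> nlinarith [he]
  · -- n ≥ 9
    have hx : (9:ℝ) ≤ (n:ℝ) := by exact_mod_cast h8
    set x : ℝ := (n:ℝ) with hxdef
    have hx0 : (0:ℝ) < x := by linarith
    have hP : (0:ℝ) < x^2+x/3+1/18 := by positivity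
    have hP1 : (0:ℝ) < (x+1)^2+(x+1)/3+1/18 := by positivity
    have hL : (0:ℝ) < (x+1)^(4*n) * ((x+1)^2 + (x+1)/3 + 1/18) := by positivity
    have hR : (0:ℝ) < Real.exp 1 ^ 4 * (x^(4*n) * (x^2+x/3+1/18)) := by positivity
    rw [← Real.log_le_log_iff hL hR]
    rw [Real.log_mul (by positivity) (by positivity), Real.log_mul (by positivity) (by positivity),
        Real.log_mul (by positivity) (by positivity), Real.log_pow, Real.log_pow,
        Real.log_pow, Real.log_exp]
    -- goal: 4*n * log (x+1) + log P(x+1) ≤ 4*1 + (4*n*log x + log P(x))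
    have hlog1 : Real.log (x+1) - Real.log x = Real.log (1 + 1/x) := by
      rw [← Real.log_div (by positivity) (by positivity)]
      congr 1
      field_simp
    have hlog2 : Real.log ((x+1)^2 + (x+1)/3 + 1/18) - Real.log (x^2+x/3+1/18)
        = Real.log (1 + (2*x+4/3)/(x^2+x/3+1/18)) := by
      rw [← Real.log_div (by positivity) (by positivity)]
      congr 1
      field_simp
      ring
    set t : ℝ := 1/x with htdef
    set s : ℝ := (2*x+4/3)/(x^2+x/3+1/18) with hsdef
    have ht0 : 0 ≤ t := by positivity
    have ht1 : t ≤ 1/2 := by rw [htdef, div_le_div_iff₀ hx0 (by norm_num)]; linarith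
    have hs0 : 0 ≤ s := by positivity
    have hs1 : s ≤ 1/2 := by
      rw [hsdef, div_le_div_iff₀ hP (by norm_num)]
      nlinarith
    have e1 := logbound t ht0 ht1
    have e2 := logbound s hs0 hs1
    have e3 := keyineq x (x^2+x/3+1/18) s hx rfl hsdef
    have e1' : 4*(n:ℝ) * Real.log (1+t) ≤ 4*x*(t - t^2/2 + t^3/3 - t^4/4 + t^5/5 - t^6/6 + t^7/7 - t^8/8 + t^9/9 + 2*t^10) := by
      rw [show 4*(n:ℝ) = 4*x from rfl]
      exact mul_le_mul_of_nonneg_left e1 (by positivity)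
    have e4 : 4*x*(t - t^2/2 + t^3/3 - t^4/4 + t^5/5 - t^6/6 + t^7/7 - t^8/8 + t^9/9 + 2*t^10)
        = 4 - (2/x - 4/(3*x^2) + 1/x^3 - 4/(5*x^4) + 2/(3*x^5) - 4/(7*x^6) + 1/(2*x^7) - 4/(9*x^8)) + 8/x^9 := by
      rw [htdef]
      field_simp
      ring
    have hcast : ((4*n : ℕ):ℝ) = 4*x := by push_cast; ring
    calc (4*n : ℕ) * Real.log (x+1) + Real.log ((x+1)^2 + (x+1)/3 + 1/18)
        = 4*(n:ℝ) * Real.log (1+t) + Real.log (1+s) + ((4*n:ℕ) * Real.log x + Real.log (x^2+x/3+1/18)) := by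
          rw [← hlog1, ← hlog2, hcast]; push_cast; ring
      _ ≤ 4 + ((4*n:ℕ) * Real.log x + Real.log (x^2+x/3+1/18)) := by
          have := e2.trans (by linarith : s - s^2/2 + s^3/3 - s^4/4 + s^5/5 - s^6/6 + s^7/7 - s^8/8 + s^9/9 + 2*s^10 ≤ (2/x - 4/(3*x^2) + 1/x^3 - 4/(5*x^4) + 2/(3*x^5) - 4/(7*x^6) + 1/(2*x^7) - 4/(9*x^8)) - 8/x^9)
          linarith [e1'.trans_eq e4]
      _ = 4*1 + ((4*n:ℕ) * Real.log x + Real.log (x^2+x/3+1/18)) := by ring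

noncomputable def F (n : ℕ) : ℝ :=
  (n.factorial : ℝ) * Real.exp n / ((n:ℝ)^n * ((n:ℝ)^2+(n:ℝ)/3+1/18) ^ ((1:ℝ)/4))

lemma rpow_quarter_pow {x : ℝ} (hx : 0 ≤ x) : (x ^ ((1:ℝ)/4)) ^ (4:ℕ) = x := by
  rw [← Real.rpow_natCast (x ^ ((1:ℝ)/4)) 4, ← Real.rpow_mul hx]
  norm_num

lemma F_pos {n : ℕ} (hn : 1 ≤ n) : 0 < F n := by
  have h : (0:ℝ) < (n:ℝ) := by exact_mod_cast hn
  unfold F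
  positivity

lemma F_step (n : ℕ) (hn : 1 ≤ n) : F n ≤ F (n+1) := by
  have hn0 : (0:ℝ) < (n:ℝ) := by exact_mod_cast hn
  have hP : (0:ℝ) < (n:ℝ)^2+(n:ℝ)/3+1/18 := by positivity
  have hP1 : (0:ℝ) < ((n:ℝ)+1)^2+((n:ℝ)+1)/3+1/18 := by positivity
  refine le_of_pow_le_pow_left₀ (by norm_num : (4:ℕ) ≠ 0) (F_pos (by omega)).le ?_
  unfold F
  rw [div_pow, div_pow, mul_pow, mul_pow, mul_pow, mul_pow,
      rpow_quarter_pow hP.le, rpow_quarter_pow (by push_cast; exact hP1.le)]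
  rw [div_le_div_iff₀ (by positivity) (by positivity)]
  have hcore := core n hn
  push_cast
  rw [Nat.factorial_succ]
  push_cast
  have hexp : Real.exp ((n:ℝ)+1) = Real.exp n * Real.exp 1 := by
    rw [← Real.exp_add]
  rw [hexp]
  have hpow : ((n:ℝ)+1)^(n+1) = ((n:ℝ)+1)^n * ((n:ℝ)+1) := by ring
  -- goal: n!^4 exp(n)^4 * ((n+1)^(n+1))^4 * P(n+1) ≤ ((n+1)*n!)^4 (exp n * exp 1)^4 * (n^n)^4 * P n
  have key : ((n:ℝ)+1)^(4*n) * (((n:ℝ)+1)^2 + ((n:ℝ)+1)/3 + 1/18)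
      ≤ Real.exp 1 ^ 4 * ((n:ℝ)^(4*n) * ((n:ℝ)^2+(n:ℝ)/3+1/18)) := hcore
  have c0 : (0:ℝ) ≤ (n.factorial:ℝ)^4 * Real.exp n ^4 * ((n:ℝ)+1)^4 := by positivity
  calc (n.factorial:ℝ)^4 * Real.exp n ^4 * ((((n:ℝ)+1)^(n+1))^4 * (((n:ℝ)+1)^2 + ((n:ℝ)+1)/3 + 1/18))
      = ((n.factorial:ℝ)^4 * Real.exp n ^4 * ((n:ℝ)+1)^4) * (((n:ℝ)+1)^(4*n) * (((n:ℝ)+1)^2 + ((n:ℝ)+1)/3 + 1/18)) := by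
        rw [← pow_mul]; ring_nf
    _ ≤ ((n.factorial:ℝ)^4 * Real.exp n ^4 * ((n:ℝ)+1)^4) * (Real.exp 1 ^ 4 * ((n:ℝ)^(4*n) * ((n:ℝ)^2+(n:ℝ)/3+1/18))) := by
        exact mul_le_mul_of_nonneg_left key c0
    _ = (((n:ℝ)+1) * (n.factorial:ℝ))^4 * (Real.exp n * Real.exp 1)^4 * (((n:ℝ)^n)^4 * ((n:ℝ)^2+(n:ℝ)/3+1/18)) := by
        rw [← pow_mul]; ring

lemma F_eq (n : ℕ) (hn : 1 ≤ n) :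
    F n = stirlingSeq n * (4*(n:ℝ)^2 / ((n:ℝ)^2+(n:ℝ)/3+1/18)) ^ ((1:ℝ)/4) := by
  have hn0 : (0:ℝ) < (n:ℝ) := by exact_mod_cast hn
  have hP : (0:ℝ) < (n:ℝ)^2+(n:ℝ)/3+1/18 := by positivity
  rw [stirlingSeq, Real.div_rpow (by positivity) hP.le]
  have h1 : (4*(n:ℝ)^2) ^ ((1:ℝ)/4) = Real.sqrt (2*(n:ℝ)) := by
    rw [show (4*(n:ℝ)^2) = (2*(n:ℝ))^(2:ℕ) by ring, ← Real.rpow_natCast ((2:ℝ)*n) 2,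
        ← Real.rpow_mul (by positivity), Real.sqrt_eq_rpow]
    norm_num
  rw [h1, F]
  rw [div_pow, div_mul_div_comm]
  field_simp
  ring_nf
  rw [Real.exp_one_pow]

lemma quarter4 : ((4:ℝ)) ^ ((1:ℝ)/4) = Real.sqrt 2 := by
  rw [show (4:ℝ) = (2:ℝ)^(2:ℕ) by norm_num, ← Real.rpow_natCast (2:ℝ) 2,
      ← Real.rpow_mul (by norm_num), Real.sqrt_eq_rpow]
  norm_num

lemma F_tendsto : Tendsto F atTop (𝓝 (Real.sqrt (2*Real.pi))) := by
  have h1 : Tendsto (fun n : ℕ => 4*(n:ℝ)^2 / ((n:ℝ)^2+(n:ℝ)/3+1/18)) atTop (𝓝 4) := by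
    have h0 : Tendsto (fun n : ℕ => 1/(n:ℝ)) atTop (𝓝 0) := tendsto_one_div_atTop_nhds_zero_nat
    have h2 : Tendsto (fun n : ℕ => 4 / (1 + (1/3)*(1/(n:ℝ)) + (1/18)*(1/(n:ℝ))^2)) atTop (𝓝 4) := by
      have : Tendsto (fun n : ℕ => 1 + (1/3)*(1/(n:ℝ)) + (1/18)*(1/(n:ℝ))^2) atTop (𝓝 1) := by
        have := ((h0.const_mul (1/3:ℝ)).const_add 1).add ((h0.pow 2).const_mul (1/18:ℝ))
        simpa using this
      simpa using (show Tendsto (fun n : ℕ => 4 / (1 + (1/3)*(1/(n:ℝ)) + (1/18)*(1/(n:ℝ))^2)) atTop (𝓝 ((4:ℝ)/1)) from tendsto_const_nhds.div this (by norm_num))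
    apply h2.congr'
    filter_upwards [eventually_ge_atTop 1] with n hn
    have hn0 : (0:ℝ) < (n:ℝ) := by exact_mod_cast hn
    field_simp
  have h2 : Tendsto (fun n : ℕ => (4*(n:ℝ)^2 / ((n:ℝ)^2+(n:ℝ)/3+1/18)) ^ ((1:ℝ)/4)) atTop
      (𝓝 (Real.sqrt 2)) := by
    rw [← quarter4]
    exact h1.rpow_const (Or.inl (by norm_num))
  have h3 := tendsto_stirlingSeq_sqrt_pi.mul h2
  rw [show Real.sqrt Real.pi * Real.sqrt 2 = Real.sqrt (2*Real.pi) by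
      rw [Real.sqrt_mul (by norm_num), mul_comm]] at h3
  apply h3.congr'
  filter_upwards [eventually_ge_atTop 1] with n hn
  exact (F_eq n hn).symm



lemma F_le (n : ℕ) (hn : 1 ≤ n) : F n ≤ Real.sqrt (2*Real.pi) := by
  refine ge_of_tendsto F_tendsto ?_
  rw [eventually_atTop]
  refine ⟨n, fun m hm => ?_⟩
  induction m, hm using Nat.le_induction with
  | base => exact le_refl _
  | succ m hm ih => exact ih.trans (F_step m (le_trans hn hm))

theorem stmt_17 (n : ℕ) (hn : 1 ≤ n) :
    (Real.exp 1 / Real.sqrt (2 * Real.pi)) * ((18:ℝ)/25) ^ ((1:ℝ)/4) *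
        (n:ℝ) ^ (n:ℝ) * Real.exp (-(n:ℝ)) *
        ((n:ℝ)^2 + (n:ℝ)/3 + 1/18) ^ ((1:ℝ)/4) < (n.factorial : ℝ) ∧
    (n.factorial : ℝ) ≤
      Real.sqrt (2 * Real.pi) * (n:ℝ) ^ (n:ℝ) * Real.exp (-(n:ℝ)) *
        ((n:ℝ)^2 + (n:ℝ)/3 + 1/18) ^ ((1:ℝ)/4) := by
  have hn0 : (0:ℝ) < (n:ℝ) := by exact_mod_cast hn
  have hP : (0:ℝ) < (n:ℝ)^2+(n:ℝ)/3+1/18 := by positivity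
  have hpi : (0:ℝ) < Real.pi := Real.pi_pos
  have hsqrt2pi : (0:ℝ) < Real.sqrt (2*Real.pi) := Real.sqrt_pos.2 (by positivity)
  have hrpow : (n:ℝ) ^ ((n:ℝ)) = (n:ℝ) ^ (n:ℕ) := Real.rpow_natCast _ n
  have hexpn : Real.exp (-(n:ℝ)) = (Real.exp (n:ℝ))⁻¹ := Real.exp_neg _
  have hexppos : (0:ℝ) < Real.exp (n:ℝ) := Real.exp_pos _
  constructor
  · -- lower bound
    -- √π ≤ stirlingSeq n
    have hstir : Real.sqrt Real.pi ≤ stirlingSeq n := by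
      obtain ⟨m, rfl⟩ : ∃ m, n = m + 1 := ⟨n - 1, by omega⟩
      exact Stirling.stirlingSeq'_antitone.le_of_tendsto
        (tendsto_stirlingSeq_sqrt_pi.comp (tendsto_add_atTop_nat 1)) m
    have hfac : Real.sqrt Real.pi * (Real.sqrt (2*(n:ℝ)) * ((n:ℝ)/Real.exp 1)^(n:ℕ)) ≤ (n.factorial:ℝ) := by
      have hden : (0:ℝ) < Real.sqrt (2*(n:ℝ)) * ((n:ℝ)/Real.exp 1)^(n:ℕ) := by positivity
      rw [stirlingSeq, le_div_iff₀ hden] at hstir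
      linarith
    have hkey : (Real.exp 1 / Real.sqrt (2 * Real.pi)) * ((18:ℝ)/25) ^ ((1:ℝ)/4) *
        ((n:ℝ)^2 + (n:ℝ)/3 + 1/18) ^ ((1:ℝ)/4) < Real.sqrt Real.pi * Real.sqrt (2*(n:ℝ)) := by
      apply lt_of_pow_lt_pow_left₀ 4 (by positivity)
      have h4 : ∀ x : ℝ, 0 ≤ x → (x ^ ((1:ℝ)/4)) ^ (4:ℕ) = x := fun x hx => rpow_quarter_pow hx
      rw [mul_pow, mul_pow, mul_pow, h4 _ (by norm_num), h4 _ hP.le]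
      have hs1 : (Real.sqrt (2*Real.pi))^(4:ℕ) = 4*Real.pi^2 := by
        rw [show (4:ℕ) = 2*2 by norm_num, pow_mul, Real.sq_sqrt (by positivity)]
        ring
      have hs2 : (Real.sqrt Real.pi)^(4:ℕ) = Real.pi^2 := by
        rw [show (4:ℕ) = 2*2 by norm_num, pow_mul, Real.sq_sqrt hpi.le]
      have hs3 : (Real.sqrt (2*(n:ℝ)))^(4:ℕ) = 4*(n:ℝ)^2 := by
        rw [show (4:ℕ) = 2*2 by norm_num, pow_mul, Real.sq_sqrt (by positivity)]
        ring
      rw [div_pow, hs1, hs2, hs3]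
      rw [div_mul_eq_mul_div, div_mul_eq_mul_div, div_lt_iff₀ (by positivity)]
      -- e^4 * (18/25) * P(n) < π² (4 n²) (4π²)
      have hP25 : (n:ℝ)^2 + (n:ℝ)/3 + 1/18 ≤ (25/18) * (n:ℝ)^2 := by
        have h1 : (1:ℝ) ≤ (n:ℝ) := by exact_mod_cast hn
        nlinarith
      have he : Real.exp 1 ^ 4 < (2*Real.pi)^4 := by
        have h1 := Real.exp_one_lt_d9
        have h2 := Real.pi_gt_three
        have h3 : Real.exp 1 < 2*Real.pi := by linarith
        gcongr
      have hn2 : (1:ℝ) ≤ (n:ℝ)^2 := by nlinarith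
      nlinarith [Real.exp_pos 1, pow_pos (Real.exp_pos 1) 4, sq_nonneg (Real.pi*(n:ℝ))]
    calc (Real.exp 1 / Real.sqrt (2 * Real.pi)) * ((18:ℝ)/25) ^ ((1:ℝ)/4) *
        (n:ℝ) ^ ((n:ℝ)) * Real.exp (-(n:ℝ)) * ((n:ℝ)^2 + (n:ℝ)/3 + 1/18) ^ ((1:ℝ)/4)
        = ((Real.exp 1 / Real.sqrt (2 * Real.pi)) * ((18:ℝ)/25) ^ ((1:ℝ)/4) *
            ((n:ℝ)^2 + (n:ℝ)/3 + 1/18) ^ ((1:ℝ)/4)) * ((n:ℝ)^(n:ℕ) * Real.exp (-(n:ℝ))) := by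
          rw [hrpow]; ring
      _ < (Real.sqrt Real.pi * Real.sqrt (2*(n:ℝ))) * ((n:ℝ)^(n:ℕ) * Real.exp (-(n:ℝ))) := by
          apply mul_lt_mul_of_pos_right hkey (by positivity)
      _ = Real.sqrt Real.pi * (Real.sqrt (2*(n:ℝ)) * ((n:ℝ)/Real.exp 1)^(n:ℕ)) := by
          rw [div_pow, Real.exp_one_pow, hexpn]
          ring
      _ ≤ (n.factorial:ℝ) := hfac
  · -- upper bound
    have hF := F_le n hn
    rw [F, div_le_iff₀ (by positivity)] at hF
    calc (n.factorial:ℝ) = (n.factorial:ℝ) * Real.exp (n:ℝ) * Real.exp (-(n:ℝ)) := by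
          rw [hexpn]; field_simp
      _ ≤ Real.sqrt (2*Real.pi) * ((n:ℝ)^(n:ℕ) * ((n:ℝ)^2+(n:ℝ)/3+1/18) ^ ((1:ℝ)/4)) * Real.exp (-(n:ℝ)) := by
          apply mul_le_mul_of_nonneg_right hF (by positivity)
      _ = Real.sqrt (2*Real.pi) * (n:ℝ)^((n:ℝ)) * Real.exp (-(n:ℝ)) * ((n:ℝ)^2+(n:ℝ)/3+1/18) ^ ((1:ℝ)/4) := by
          rw [hrpow]; ring
end

section
/- For all x > 0, exp(x·ψ(x/log(x+1))) ≤ Γ(x+1) ≤ exp(x·ψ(x/2 + 1)). -/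
noncomputable def psi (x : ℝ) : ℝ := deriv Real.Gamma x / Real.Gamma x

open Real Filter Topology Finset

noncomputable def S (c : ℝ) : ℝ :=
  -Real.eulerMascheroniConstant - 1/c + ∑' k : ℕ, (1/(k+1:ℝ) - 1/(c+k+1))


lemma hd_aux (t : ℝ) (ht0 : t ≠ 0) : HasDerivAt (fun s : ℝ => s - 1/s - 2 * Real.log s)
    (1 - (-(1/t^2)) - 2 * (1/t)) t := by
  have h := ((hasDerivAt_id t).sub (hasDerivAt_inv ht0)).sub
    ((Real.hasDerivAt_log ht0).const_mul 2)
  have e1 : (fun s : ℝ => s - 1/s - 2 * Real.log s) = fun s : ℝ => (id s - s⁻¹) - 2 * Real.log s := by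
    funext s; simp [one_div]
  rw [e1]
  exact h.congr_deriv (by ring)

-- 2 log s ≤ s - 1/s for s ≥ 1
lemma two_log_le {s : ℝ} (hs : 1 ≤ s) : 2 * Real.log s ≤ s - 1/s := by
  have key : MonotoneOn (fun s : ℝ => s - 1/s - 2 * Real.log s) (Set.Ici 1) := by
    apply monotoneOn_of_deriv_nonneg (convex_Ici 1)
    · apply ContinuousOn.sub
      · exact (continuous_id.continuousOn).sub
          (continuousOn_const.div continuous_id.continuousOn (fun x hx => by
            simp only [Set.mem_Ici] at hx; positivity))
      · exact (continuousOn_const.mul (Real.continuousOn_log.mono (fun x hx => by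
          simp only [Set.mem_Ici] at hx; simp; positivity)))
    · intro t ht
      simp only [interior_Ici, Set.mem_Ioi] at ht
      exact (hd_aux t (by positivity)).differentiableAt.differentiableWithinAt
    · intro t ht
      simp only [interior_Ici, Set.mem_Ioi] at ht
      have ht0 : t ≠ 0 := by positivity
      rw [(hd_aux t ht0).deriv]
      have : 1 - (-(1/t^2)) - 2 * (1/t) = (1 - 1/t)^2 := by field_simp; ring
      rw [this]; positivity
  have h0 := key (Set.self_mem_Ici) (Set.mem_Ici.mpr hs) hs
  simp only [Real.log_one] at h0
  linarith

-- log(v/u) ≤ (v-u)/sqrt(uv) for 0 < u ≤ v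
lemma log_div_le_sub_div_sqrt {u v : ℝ} (hu : 0 < u) (huv : u ≤ v) :
    Real.log (v/u) ≤ (v - u) / Real.sqrt (u*v) := by
  have hv : 0 < v := lt_of_lt_of_le hu huv
  set s := Real.sqrt (v/u) with hs
  have hs1 : 1 ≤ s := by
    rw [hs, show (1:ℝ) = Real.sqrt 1 by simp]
    exact Real.sqrt_le_sqrt ((one_le_div hu).mpr huv)
  have hs0 : 0 < s := lt_of_lt_of_le one_pos hs1
  have hsq : s^2 = v/u := Real.sq_sqrt (by positivity)
  have hlog : Real.log (v/u) = 2 * Real.log s := by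
    rw [← hsq, Real.log_pow]; push_cast; ring
  have key := two_log_le hs1
  rw [hlog]
  have husv : u * s = Real.sqrt (u*v) := by
    rw [hs, ← Real.sqrt_sq hu.le, ← Real.sqrt_mul (by positivity)]
    congr 1; rw [Real.sqrt_sq hu.le]; field_simp
  have hsv : s^2 * u = v := by rw [hsq]; field_simp
  calc 2 * Real.log s ≤ s - 1/s := key
    _ = (s^2*u - u)/(u*s) := by field_simp
    _ = (v - u) / Real.sqrt (u*v) := by rw [hsv, husv]

lemma hd_aux2 (t : ℝ) (ht : 0 < t) : HasDerivAt (fun s : ℝ => Real.log s - 2*(s-1)/(s+1))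
    (1/t - 4/(t+1)^2) t := by
  have h1 : HasDerivAt (fun s : ℝ => 2*(s-1)/(s+1)) (4/(t+1)^2) t := by
    have hn : HasDerivAt (fun s : ℝ => 2*(s-1)) 2 t := by
      simpa using ((hasDerivAt_id t).sub_const 1).const_mul 2
    have hdd : HasDerivAt (fun s : ℝ => s+1) 1 t := (hasDerivAt_id t).add_const 1
    have := hn.div hdd (by positivity)
    exact this.congr_deriv (by ring)
  have h2 : HasDerivAt (fun s : ℝ => Real.log s) (1/t) t := by
    simpa [one_div] using Real.hasDerivAt_log ht.ne'
  exact h2.sub h1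

-- 2(t-1)/(t+1) ≤ log t for t ≥ 1
lemma log_ge_two_mul {t : ℝ} (ht : 1 ≤ t) : 2*(t-1)/(t+1) ≤ Real.log t := by
  have key : MonotoneOn (fun s : ℝ => Real.log s - 2*(s-1)/(s+1)) (Set.Ici 1) := by
    apply monotoneOn_of_deriv_nonneg (convex_Ici 1)
    · apply ContinuousOn.sub
      · exact Real.continuousOn_log.mono (fun x hx => by
          simp only [Set.mem_Ici] at hx; simp; positivity)
      · exact ContinuousOn.div (by fun_prop) (by fun_prop) (fun x hx => by
          simp only [Set.mem_Ici] at hx; positivity)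
    · intro s hsm
      simp only [interior_Ici, Set.mem_Ioi] at hsm
      exact (hd_aux2 s (by positivity)).differentiableAt.differentiableWithinAt
    · intro s hsm
      simp only [interior_Ici, Set.mem_Ioi] at hsm
      have hs0 : 0 < s := by positivity
      rw [(hd_aux2 s hs0).deriv]
      rw [div_sub_div _ _ hs0.ne' (by positivity), div_nonneg_iff]
      left
      constructor
      · nlinarith
      · positivity
  have h0 := key (Set.self_mem_Ici) (Set.mem_Ici.mpr ht) ht
  simp only [Real.log_one] at h0
  norm_num at h0
  linarith

-- L(1+t, x+1+t) ≥ L(1,x+1) + t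
lemma logmean_translate {x : ℝ} (hx : 0 < x) {t : ℝ} (ht : 0 ≤ t) :
    x / Real.log (x+1) + t ≤ x / (Real.log (x+1+t) - Real.log (1+t)) := by
  have hgpos : ∀ s : ℝ, 0 ≤ s → 0 < Real.log (x+1+s) - Real.log (1+s) := by
    intro s hs
    have := Real.log_lt_log (show (0:ℝ) < 1+s by linarith) (show 1+s < x+1+s by linarith)
    linarith
  have hgd : ∀ s : ℝ, 0 < 1+s → HasDerivAt (fun r : ℝ => Real.log (x+1+r) - Real.log (1+r))
      ((x+1+s)⁻¹ - (1+s)⁻¹) s := by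
    intro s hs
    have h1 : HasDerivAt (fun r : ℝ => Real.log (x+1+r)) ((x+1+s)⁻¹) s := by
      have := (Real.hasDerivAt_log (show x+1+s ≠ 0 by intro h; nlinarith)).comp s
        (((hasDerivAt_id s).const_add (x+1)))
      simpa [Function.comp_def] using this
    have h2 : HasDerivAt (fun r : ℝ => Real.log (1+r)) ((1+s)⁻¹) s := by
      have := (Real.hasDerivAt_log hs.ne').comp s (((hasDerivAt_id s).const_add 1))
      simpa [Function.comp_def] using this
    exact h1.sub h2
  have hRd : ∀ s : ℝ, 0 ≤ s → HasDerivAt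
      (fun r : ℝ => x / (Real.log (x+1+r) - Real.log (1+r)) - r)
      ((0 * (Real.log (x+1+s) - Real.log (1+s)) - x * ((x+1+s)⁻¹ - (1+s)⁻¹))
        / (Real.log (x+1+s) - Real.log (1+s))^2 - 1) s := by
    intro s hs
    exact ((hasDerivAt_const s x).div (hgd s (by linarith)) (hgpos s hs).ne').sub (hasDerivAt_id s)
  have key : MonotoneOn (fun r : ℝ => x / (Real.log (x+1+r) - Real.log (1+r)) - r)
      (Set.Ici 0) := by
    apply monotoneOn_of_deriv_nonneg (convex_Ici 0)
    · intro s hs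
      exact ((hRd s hs).differentiableAt.continuousAt).continuousWithinAt
    · intro s hs
      simp only [interior_Ici, Set.mem_Ioi] at hs
      exact (hRd s hs.le).differentiableAt.differentiableWithinAt
    · intro s hs
      simp only [interior_Ici, Set.mem_Ioi] at hs
      rw [(hRd s hs.le).deriv]
      set g := Real.log (x+1+s) - Real.log (1+s) with hg
      have hg0 : 0 < g := hgpos s hs.le
      have hu : (0:ℝ) < 1+s := by linarith
      have hv : (0:ℝ) < x+1+s := by linarith
      have hgle : g ≤ x / Real.sqrt ((1+s)*(x+1+s)) := by
        have := log_div_le_sub_div_sqrt hu (show 1+s ≤ x+1+s by linarith)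
        rw [Real.log_div hv.ne' hu.ne'] at this
        convert this using 2 <;> ring
      have hsq : g^2 ≤ x^2 / ((1+s)*(x+1+s)) := by
        have h2 := pow_le_pow_left₀ hg0.le hgle 2
        rwa [div_pow, Real.sq_sqrt (by positivity)] at h2
      rw [sub_nonneg, le_div_iff₀ (by positivity)]
      have hnum : 0 * g - x * ((x+1+s)⁻¹ - (1+s)⁻¹) = x^2 / ((1+s)*(x+1+s)) := by
        field_simp
        ring
      rw [hnum]
      calc 1 * g^2 = g^2 := one_mul _
        _ ≤ x^2 / ((1+s)*(x+1+s)) := hsq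
  have h0 := key (Set.self_mem_Ici) (Set.mem_Ici.mpr ht) ht
  simp only [add_zero, Real.log_one, sub_zero] at h0
  linarith

lemma summable_base : Summable (fun k : ℕ => 1/((k:ℝ)+1)^2) := by
  have := (summable_nat_add_iff (f := fun n : ℕ => 1/(n:ℝ)^2) 1).mpr ?_
  · refine this.congr fun n => by push_cast; ring_nf
  · norm_num [Real.summable_one_div_nat_pow]

lemma summable_sq {c : ℝ} (hc : 0 < c) : Summable (fun k : ℕ => 1/(c+k+1)^2) := by
  refine Summable.of_nonneg_of_le (fun k => by positivity) (fun k => ?_) summable_base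
  apply one_div_le_one_div_of_le (by positivity)
  have : (0:ℝ) ≤ (k:ℝ)+1 := by positivity
  nlinarith

lemma summable_S {c : ℝ} (hc : 0 < c) : Summable (fun k : ℕ => 1/(k+1:ℝ) - 1/(c+k+1)) := by
  refine Summable.of_nonneg_of_le (fun k => ?_) (fun k => ?_) (summable_base.mul_left c)
  · have h1 : (0:ℝ) < (k:ℝ)+1 := by positivity
    rw [sub_nonneg]
    apply one_div_le_one_div_of_le h1 (by linarith)
  · have h1 : (0:ℝ) < (k:ℝ)+1 := by positivity
    have h2 : (0:ℝ) < c+(k:ℝ)+1 := by linarith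
    rw [div_sub_div _ _ h1.ne' h2.ne', div_le_iff₀ (by positivity)]
    have he : 1 * (c+(k:ℝ)+1) - ((k:ℝ)+1) * 1 = c := by ring
    rw [he]
    have hk2 : ((k:ℝ)+1)^2 ≤ ((k:ℝ)+1)*(c+(k:ℝ)+1) := by nlinarith
    calc c = c * (1/((k:ℝ)+1)^2) * ((k:ℝ)+1)^2 := by field_simp
      _ ≤ c * (1/((k:ℝ)+1)^2) * (((k:ℝ)+1)*(c+(k:ℝ)+1)) := by
          apply mul_le_mul_of_nonneg_left hk2 (by positivity)

lemma tendsto_V {c : ℝ} (hc : 0 < c) :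
    Tendsto (fun n : ℕ => Real.log n - ∑ j ∈ range (n+1), 1/(c+j)) atTop (𝓝 (S c)) := by
  have h1 : Tendsto (fun n : ℕ => -(Real.eulerMascheroniSeq' n) - 1/c
      + ∑ k ∈ range n, (1/(k+1:ℝ) - 1/(c+k+1))) atTop (𝓝 (S c)) := by
    unfold S
    exact ((Real.tendsto_eulerMascheroniSeq'.neg).sub_const (1/c)).add
      (summable_S hc).hasSum.tendsto_sum_nat
  apply h1.congr'
  filter_upwards [eventually_ne_atTop 0] with n hn
  have hes : Real.eulerMascheroniSeq' n = harmonic n - Real.log n := by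
    simp [Real.eulerMascheroniSeq', hn]
  have hh : (harmonic n : ℝ) = ∑ k ∈ range n, 1/((k:ℝ)+1) := by
    rw [harmonic]
    push_cast
    simp [one_div]
  have hsplit : ∑ j ∈ range (n+1), 1/(c+(j:ℝ)) =
      (∑ k ∈ range n, 1/(c+(k:ℝ)+1)) + 1/c := by
    rw [Finset.sum_range_succ' (fun j : ℕ => 1/(c+(j:ℝ))) n]
    congr 1
    · apply Finset.sum_congr rfl
      intro k _
      push_cast
      ring_nf
    · simp
  rw [hes, hsplit, hh, Finset.sum_sub_distrib]
  ring

lemma tendsto_T {a b : ℝ} (ha : 0 < a) (hb : 0 < b) :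
    Tendsto (fun n : ℕ => (b-a) * Real.log n
      - ∑ j ∈ range (n+1), (Real.log (b+j) - Real.log (a+j))) atTop
      (𝓝 (Real.log (Real.Gamma b) - Real.log (Real.Gamma a))) := by
  have hlog : ∀ s : ℝ, 0 < s → Tendsto (fun n => Real.log (Real.GammaSeq s n)) atTop
      (𝓝 (Real.log (Real.Gamma s))) := fun s hs =>
    (Real.GammaSeq_tendsto_Gamma s).log (Real.Gamma_pos_of_pos hs).ne'
  have h := (hlog b hb).sub (hlog a ha)
  apply h.congr'
  filter_upwards [eventually_ge_atTop 1] with n hn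
  have hn0 : (0:ℝ) < n := by exact_mod_cast hn
  have hid : ∀ s : ℝ, 0 < s → Real.log (Real.GammaSeq s n)
      = s * Real.log n + Real.log (Nat.factorial n) - ∑ j ∈ range (n+1), Real.log (s+j) := by
    intro s hs
    have hprod : ∀ j ∈ range (n+1), s + (j:ℝ) ≠ 0 := by
      intro j _
      have : (0:ℝ) ≤ j := by positivity
      positivity
    rw [Real.GammaSeq, Real.log_div (by positivity) (Finset.prod_ne_zero_iff.mpr hprod),
      Real.log_mul (by positivity) (by positivity), Real.log_rpow hn0,
      Real.log_prod hprod]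
  rw [hid b hb, hid a ha, Finset.sum_sub_distrib]
  ring

lemma S_mono {c c' : ℝ} (hc : 0 < c) (hcc : c ≤ c') : S c ≤ S c' := by
  have hc' : 0 < c' := lt_of_lt_of_le hc hcc
  unfold S
  have h1 : 1/c' ≤ 1/c := one_div_le_one_div_of_le hc hcc
  have h2 : ∑' k : ℕ, (1/(k+1:ℝ) - 1/(c+k+1)) ≤ ∑' k : ℕ, (1/(k+1:ℝ) - 1/(c'+k+1)) := by
    apply Summable.tsum_le_tsum _ (summable_S hc) (summable_S hc')
    intro k
    have : 1/(c'+k+1) ≤ 1/(c+k+1) := by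
      apply one_div_le_one_div_of_le (by positivity) (by linarith)
    linarith
  linarith

lemma S_shift {c h : ℝ} (hc : 0 < c) (hh : 0 < h) :
    S (c+h) ≤ S c + h * (1/c^2 + ∑' k : ℕ, 1/(c+k+1)^2) := by
  have hch : 0 < c + h := by linarith
  have hsub : ∑' k : ℕ, (1/(k+1:ℝ) - 1/((c+h)+k+1)) - ∑' k : ℕ, (1/(k+1:ℝ) - 1/(c+k+1))
      = ∑' k : ℕ, (1/(c+k+1:ℝ) - 1/((c+h)+k+1)) := by
    rw [← Summable.tsum_sub (summable_S hch) (summable_S hc)]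
    congr 1
    funext k
    ring
  have hbound : ∑' k : ℕ, (1/(c+k+1:ℝ) - 1/((c+h)+k+1)) ≤ h * ∑' k : ℕ, 1/(c+k+1)^2 := by
    rw [← tsum_mul_left]
    have hsummand : Summable (fun k : ℕ => 1/(c+k+1:ℝ) - 1/((c+h)+k+1)) := by
      refine ((summable_S hch).sub (summable_S hc)).congr fun k => by ring
    apply Summable.tsum_le_tsum _ hsummand ((summable_sq hc).mul_left h)
    · intro k
      have h1 : (0:ℝ) < c+(k:ℝ)+1 := by positivity
      have h2 : (0:ℝ) < (c+h)+(k:ℝ)+1 := by linarith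
      rw [div_sub_div _ _ h1.ne' h2.ne', div_le_iff₀ (by positivity)]
      have he : 1 * ((c+h)+(k:ℝ)+1) - (c+(k:ℝ)+1) * 1 = h := by ring
      rw [he]
      have : (c+(k:ℝ)+1)^2 ≤ (c+(k:ℝ)+1) * ((c+h)+(k:ℝ)+1) := by nlinarith
      calc h = h * (1/(c+(k:ℝ)+1)^2) * (c+(k:ℝ)+1)^2 := by field_simp
        _ ≤ h * (1/(c+(k:ℝ)+1)^2) * ((c+(k:ℝ)+1) * ((c+h)+(k:ℝ)+1)) := by
            apply mul_le_mul_of_nonneg_left this (by positivity)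
  have h1c : 1/c - 1/(c+h) ≤ h * (1/c^2) := by
    rw [div_sub_div _ _ hc.ne' hch.ne', div_le_iff₀ (by positivity)]
    have he : 1 * (c+h) - c * 1 = h := by ring
    rw [he]
    have : c^2 ≤ c * (c+h) := by nlinarith
    calc h = h * (1/c^2) * c^2 := by field_simp
      _ ≤ h * (1/c^2) * (c * (c+h)) := by apply mul_le_mul_of_nonneg_left this (by positivity)
  unfold S
  have := hsub
  nlinarith [hbound, h1c, this]

-- difference bounds
lemma logGamma_diff_bounds {c y : ℝ} (hc : 0 < c) (hcy : c < y) :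
    (y - c) * S c ≤ Real.log (Real.Gamma y) - Real.log (Real.Gamma c) ∧
    Real.log (Real.Gamma y) - Real.log (Real.Gamma c) ≤ (y - c) * S y := by
  have hy : 0 < y := lt_trans hc hcy
  have hT := tendsto_T hc hy
  constructor
  · apply le_of_tendsto_of_tendsto' ((tendsto_V hc).const_mul (y-c)) hT
    intro n
    simp only [mul_sub, Finset.mul_sum]
    apply sub_le_sub_left
    apply Finset.sum_le_sum
    intro j _
    have hcj : (0:ℝ) < c + j := by positivity
    have hyj : (0:ℝ) < y + j := by linarith
    rw [← Real.log_div hyj.ne' hcj.ne']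
    calc Real.log ((y+j)/(c+j)) ≤ (y+j)/(c+j) - 1 :=
          Real.log_le_sub_one_of_pos (by positivity)
      _ = (y-c) * (1/(c+j)) := by field_simp; ring
  · apply le_of_tendsto_of_tendsto' hT ((tendsto_V hy).const_mul (y-c))
    intro n
    simp only [mul_sub, Finset.mul_sum]
    apply sub_le_sub_left
    apply Finset.sum_le_sum
    intro j _
    have hcj : (0:ℝ) < c + j := by positivity
    have hyj : (0:ℝ) < y + j := by linarith
    have := Real.log_le_sub_one_of_pos (show (0:ℝ) < (c+j)/(y+j) by positivity)
    rw [Real.log_div hcj.ne' hyj.ne'] at this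
    have he : (c+j)/(y+j) - 1 = -((y-c) * (1/(y+j))) := by field_simp; ring
    rw [he] at this
    linarith

lemma psi_eq_S {c : ℝ} (hc : 0 < c) : psi c = S c := by
  have hΓd : DifferentiableAt ℝ Real.Gamma c :=
    Real.differentiableAt_Gamma (fun m => by
      have : (0:ℝ) ≤ m := by positivity
      intro h; rw [h] at hc; linarith)
  have hΓpos := Real.Gamma_pos_of_pos hc
  have hder : HasDerivAt (fun t => Real.log (Real.Gamma t)) (psi c) c :=
    hΓd.hasDerivAt.log hΓpos.ne'
  have hslope : Tendsto (slope (fun t => Real.log (Real.Gamma t)) c) (𝓝[>] c) (𝓝 (psi c)) := by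
    have := hasDerivAt_iff_tendsto_slope.mp hder
    exact this.mono_left (nhdsWithin_mono c (fun y hy => ne_of_gt hy))
  have hgamma_le : ∀ y : ℝ, c < y → psi c ≤ S y := by
    intro y hy
    apply le_of_tendsto hslope
    filter_upwards [Ioo_mem_nhdsGT_of_mem (Set.left_mem_Ico.mpr hy)] with z hz
    obtain ⟨hz1, hz2⟩ := hz
    obtain ⟨_, h2⟩ := logGamma_diff_bounds hc hz1
    have hzc : 0 < z - c := by linarith
    rw [slope_def_field, div_le_iff₀ hzc]
    calc Real.log (Real.Gamma z) - Real.log (Real.Gamma c) ≤ (z - c) * S z := h2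
      _ ≤ S y * (z - c) := by
          rw [mul_comm]
          apply mul_le_mul_of_nonneg_right (S_mono (lt_trans hc hz1) hz2.le) hzc.le
  have hge : S c ≤ psi c := by
    apply ge_of_tendsto hslope
    filter_upwards [self_mem_nhdsWithin] with z hz
    have hz1 : c < z := hz
    obtain ⟨h1, _⟩ := logGamma_diff_bounds hc hz1
    have hzc : 0 < z - c := by linarith
    rw [slope_def_field, le_div_iff₀ hzc]
    calc S c * (z - c) = (z - c) * S c := by ring
      _ ≤ _ := h1
  have hle : psi c ≤ S c := by
    have hC : 0 < 1/c^2 + ∑' k : ℕ, 1/(c+k+1)^2 := by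
      have : (0:ℝ) ≤ ∑' k : ℕ, 1/(c+k+1)^2 := tsum_nonneg (fun k => by positivity)
      positivity
    apply le_of_forall_pos_le_add
    intro ε hε
    set C := 1/c^2 + ∑' k : ℕ, 1/(c+k+1)^2 with hCdef
    have hd : 0 < ε / C := by positivity
    calc psi c ≤ S (c + ε/C) := hgamma_le _ (by linarith)
      _ ≤ S c + (ε/C) * C := S_shift hc hd
      _ = S c + ε := by field_simp
  linarith

theorem stmt_18 (x : ℝ) (hx : 0 < x) :
    Real.exp (x * psi (x / Real.log (x + 1))) ≤ Real.Gamma (x + 1) ∧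
    Real.Gamma (x + 1) ≤ Real.exp (x * psi (x/2 + 1)) := by
  have hlog : 0 < Real.log (x+1) := Real.log_pos (by linarith)
  set L := x / Real.log (x+1) with hLdef
  have hL : 0 < L := by positivity
  have hA : 0 < x/2 + 1 := by linarith
  have hx1 : 0 < x + 1 := by linarith
  have hΓpos := Real.Gamma_pos_of_pos hx1
  have hT : Tendsto (fun n : ℕ => x * Real.log n
      - ∑ j ∈ range (n+1), (Real.log (x+1+j) - Real.log (1+j))) atTop
      (𝓝 (Real.log (Real.Gamma (x+1)))) := by
    have h := tendsto_T one_pos hx1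
    simp only [Real.Gamma_one, Real.log_one, sub_zero, add_sub_cancel_right] at h
    exact h
  -- upper bound: log Γ(x+1) ≤ x * S (x/2+1)
  have hupper : Real.log (Real.Gamma (x+1)) ≤ x * S (x/2+1) := by
    apply le_of_tendsto_of_tendsto' hT ((tendsto_V hA).const_mul x)
    intro n
    simp only [mul_sub, Finset.mul_sum]
    apply sub_le_sub_left
    apply Finset.sum_le_sum
    intro j _
    have hj : (0:ℝ) < 1 + j := by positivity
    have ht1 : (1:ℝ) ≤ (x+1+j)/(1+j) := by
      rw [le_div_iff₀ hj]; linarith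
    have hkey := log_ge_two_mul ht1
    rw [Real.log_div (by linarith) hj.ne'] at hkey
    have he : 2*((x+1+(j:ℝ))/(1+j) - 1)/((x+1+(j:ℝ))/(1+j) + 1) = x * (1/(x/2+1+j)) := by
      have h2 : x/2+1+(j:ℝ) ≠ 0 := by positivity
      field_simp
      ring

    rw [he] at hkey
    exact hkey
  -- lower bound: x * S L ≤ log Γ(x+1)
  have hlower : x * S L ≤ Real.log (Real.Gamma (x+1)) := by
    apply le_of_tendsto_of_tendsto' ((tendsto_V hL).const_mul x) hT
    intro n
    simp only [mul_sub, Finset.mul_sum]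
    apply sub_le_sub_left
    apply Finset.sum_le_sum
    intro j _
    have hj : (0:ℝ) < 1 + j := by positivity
    have hg : 0 < Real.log (x+1+j) - Real.log (1+j) := by
      have := Real.log_lt_log hj (show (1:ℝ)+j < x+1+j by linarith)
      linarith
    have hkey := logmean_translate hx (show (0:ℝ) ≤ j by positivity)
    rw [← hLdef] at hkey
    have hLj : 0 < L + j := by positivity
    rw [le_div_iff₀ hg] at hkey
    rw [show x * (1/(L+(j:ℝ))) = x/(L+j) by ring, le_div_iff₀ hLj]
    linarith [hkey]
  constructor
  · rw [psi_eq_S hL, ← Real.exp_log hΓpos]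
    exact Real.exp_le_exp.mpr hlower
  · rw [psi_eq_S hA, ← Real.exp_log hΓpos]
    exact Real.exp_le_exp.mpr hupper
end

section
/- For fixed x > 0, the function k ↦ x/log(1 + x/k) − k is strictly increasing on [1, ∞), takes values in (0, x), and tends to x/2 as k → ∞. -/
open Filter

section Aux
open Real Set


-- t - t^2/2 ≤ log (1+t) for t ≥ 0
lemma aux_lower {t : ℝ} (ht : 0 ≤ t) : t - t^2/2 ≤ Real.log (1+t) := by
  have h : ∀ s ∈ Set.Ici (0:ℝ), HasDerivAt (fun u => Real.log (1+u) - (u - u^2/2))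
      (1/(1+s) - (1 - s)) s := by
    intro s hs
    have h1 : (0:ℝ) < 1 + s := by simp at hs; linarith
    have := ((hasDerivAt_id s).const_add 1).log h1.ne'
    exact (this.sub (((hasDerivAt_id s).sub (((hasDerivAt_pow 2 s)).div_const 2)))).congr_deriv (by simp)
  have mono : MonotoneOn (fun u => Real.log (1+u) - (u - u^2/2)) (Set.Ici 0) := by
    apply monotoneOn_of_deriv_nonneg (convex_Ici 0)
    · exact ContinuousOn.sub (Real.continuousOn_log.comp (by fun_prop)
        (fun s hs => by simp at hs ⊢; intro h; linarith)) (by fun_prop)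
    · intro s hs
      rw [interior_Ici] at hs
      exact ((h s (Set.mem_Ici.mpr (le_of_lt hs))).differentiableAt).differentiableWithinAt
    · intro s hs
      rw [interior_Ici] at hs
      rw [((h s (Set.mem_Ici.mpr hs.le)).deriv)]
      have h1 : (0:ℝ) < 1 + s := by linarith [hs.out]
      rw [sub_nonneg, le_div_iff₀ h1]
      nlinarith [hs.out]
  have := mono (Set.self_mem_Ici) ht ht
  simpa using this

lemma aux_upper {t : ℝ} (ht : 0 ≤ t) : Real.log (1+t) ≤ t - t^2/2 + t^3/3 := by
  have h : ∀ s ∈ Set.Ici (0:ℝ), HasDerivAt (fun u => (u - u^2/2 + u^3/3) - Real.log (1+u))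
      ((1 - s + s^2) - 1/(1+s)) s := by
    intro s hs
    have h1 : (0:ℝ) < 1 + s := by simp at hs; linarith
    have hl := ((hasDerivAt_id s).const_add 1).log h1.ne'
    have hp : HasDerivAt (fun u : ℝ => u - u^2/2 + u^3/3) (1 - s + s^2) s := by
      have := ((hasDerivAt_id s).sub ((hasDerivAt_pow 2 s).div_const 2)).add
        ((hasDerivAt_pow 3 s).div_const 3)
      exact this.congr_deriv (by norm_num)
    exact (hp.sub hl).congr_deriv (by simp)
  have mono : MonotoneOn (fun u => (u - u^2/2 + u^3/3) - Real.log (1+u)) (Set.Ici 0) := by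
    apply monotoneOn_of_deriv_nonneg (convex_Ici 0)
    · exact ContinuousOn.sub (by fun_prop) (Real.continuousOn_log.comp (by fun_prop)
        (fun s hs => by simp at hs ⊢; intro h; linarith))
    · intro s hs
      rw [interior_Ici] at hs
      exact ((h s (Set.mem_Ici.mpr (le_of_lt hs))).differentiableAt).differentiableWithinAt
    · intro s hs
      rw [interior_Ici] at hs
      rw [((h s (Set.mem_Ici.mpr hs.le)).deriv)]
      have h1 : (0:ℝ) < 1 + s := by linarith [hs.out]
      rw [sub_nonneg, div_le_iff₀ h1]
      nlinarith [hs.out]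
  have := mono (Set.self_mem_Ici) ht ht
  simpa using this

-- key : 2 log u < u - u⁻¹ for 1 < u
lemma aux_key {u : ℝ} (hu : 1 < u) : 2 * Real.log u < u - u⁻¹ := by
  have h : ∀ s ∈ Set.Ici (1:ℝ), HasDerivAt (fun v => v - v⁻¹ - 2 * Real.log v)
      (1 + s⁻¹^2 - 2 * s⁻¹) s := by
    intro s hs
    have h1 : (0:ℝ) < s := by simp at hs; linarith
    have := ((hasDerivAt_id s).sub (hasDerivAt_inv h1.ne')).sub
      ((Real.hasDerivAt_log h1.ne').const_mul 2)
    exact this.congr_deriv (by ring)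
  have hsub : Set.Ici (1:ℝ) ⊆ {(0:ℝ)}ᶜ := fun s hs => by
    simp only [Set.mem_compl_iff, Set.mem_singleton_iff]
    simp only [Set.mem_Ici] at hs; intro h; rw [h] at hs; linarith
  have hcont : ContinuousOn (fun v : ℝ => v - v⁻¹ - 2 * Real.log v) (Set.Ici 1) := by
    apply ContinuousOn.sub (ContinuousOn.sub continuousOn_id (continuousOn_inv₀.mono hsub))
    exact continuousOn_const.mul (Real.continuousOn_log.mono hsub)
  have mono : StrictMonoOn (fun v => v - v⁻¹ - 2 * Real.log v) (Set.Ici 1) := by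
    apply strictMonoOn_of_deriv_pos (convex_Ici 1) hcont
    intro s hs
    rw [interior_Ici] at hs
    rw [((h s (Set.mem_Ici.mpr hs.le)).deriv)]
    have h1 : (1:ℝ) < s := hs
    have h0 : (0:ℝ) < s := by linarith
    have h2 : s⁻¹ < 1 := inv_lt_one_of_one_lt₀ h1
    have h3 : 0 < s⁻¹ := inv_pos.mpr h0
    nlinarith
  have := mono (Set.self_mem_Ici) (Set.mem_Ici.mpr hu.le) hu
  simp only [inv_one, Real.log_one] at this
  linarith


lemma aux_logmean {a b : ℝ} (ha : 0 < a) (hab : a < b) :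
    Real.log b - Real.log a < (b - a) / Real.sqrt (a*b) := by
  have hb : 0 < b := ha.trans hab
  set sa := Real.sqrt a with hsa
  set sb := Real.sqrt b with hsb
  have hsa0 : 0 < sa := Real.sqrt_pos.mpr ha
  have hsb0 : 0 < sb := Real.sqrt_pos.mpr hb
  have hsa2 : sa^2 = a := Real.sq_sqrt ha.le
  have hsb2 : sb^2 = b := Real.sq_sqrt hb.le
  have hu : 1 < sb / sa := by
    rw [lt_div_iff₀ hsa0, one_mul]
    exact Real.sqrt_lt_sqrt ha.le hab
  have hkey := aux_key hu
  have h2 : 2 * Real.log (sb/sa) = Real.log b - Real.log a := by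
    rw [Real.log_div hsb0.ne' hsa0.ne']
    have e1 : Real.log sa = Real.log a / 2 := Real.log_sqrt ha.le
    have e2 : Real.log sb = Real.log b / 2 := Real.log_sqrt hb.le
    rw [e1, e2]; ring
  have h3 : sb/sa - (sb/sa)⁻¹ = (b - a) / Real.sqrt (a*b) := by
    rw [Real.sqrt_mul ha.le, ← hsa, ← hsb, ← hsa2, ← hsb2]
    field_simp
  rw [h2, h3] at hkey
  exact hkey

lemma aux_deriv (x : ℝ) (hx : 0 < x) {k : ℝ} (hk : 0 < k) :
    HasDerivAt (fun k : ℝ => x / Real.log (1 + x/k) - k)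
      (x^2/(k*(k+x)*(Real.log (1+x/k))^2) - 1) k := by
  have hxk : 0 < x/k := div_pos hx hk
  have h1 : (0:ℝ) < 1 + x/k := by linarith
  have hL : 0 < Real.log (1 + x/k) := Real.log_pos (by linarith)
  have hinner : HasDerivAt (fun k : ℝ => 1 + x/k) (-(x/k^2)) k := by
    have := ((hasDerivAt_inv hk.ne').const_mul x).const_add 1
    simp only [div_eq_mul_inv]
    exact this.congr_deriv (by ring)
  have hlog := hinner.log h1.ne'
  have hdiv := (hasDerivAt_const k x).div hlog hL.ne'
  have := hdiv.sub (hasDerivAt_id k)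
  refine this.congr_deriv ?_
  have hkx : (0:ℝ) < k + x := by linarith
  set L := Real.log (1 + x/k) with hLdef
  field_simp
  ring

-- squeeze bounds in t
lemma aux_tlow (x : ℝ) (hx : 0 < x) {t : ℝ} (ht : 0 < t) (ht1 : t ≤ 1) :
    x * (1/2 - t/3) / (1 - t/2 + t^2/3) ≤ x / Real.log (1+t) - x/t := by
  have hL : 0 < Real.log (1+t) := Real.log_pos (by linarith)
  have hU : 0 < t - t^2/2 + t^3/3 := by nlinarith
  have hD : 0 < 1 - t/2 + t^2/3 := by nlinarith
  have h1 : x / (t - t^2/2 + t^3/3) ≤ x / Real.log (1+t) :=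
    div_le_div_of_nonneg_left hx.le hL (aux_upper ht.le)
  have h2 : x / (t - t^2/2 + t^3/3) - x/t = x * (1/2 - t/3) / (1 - t/2 + t^2/3) := by
    rw [div_sub_div _ _ hU.ne' ht.ne', div_eq_div_iff (by positivity) hD.ne']
    ring
  linarith
lemma aux_tup (x : ℝ) (hx : 0 < x) {t : ℝ} (ht : 0 < t) (ht1 : t ≤ 1) :
    x / Real.log (1+t) - x/t ≤ x / (2 - t) := by
  have hL : 0 < Real.log (1+t) := Real.log_pos (by linarith)
  have hV : 0 < t - t^2/2 := by nlinarith
  have h1 : x / Real.log (1+t) ≤ x / (t - t^2/2) :=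
    div_le_div_of_nonneg_left hx.le hV (aux_lower ht.le)
  have h2 : x / (t - t^2/2) - x/t = x / (2 - t) := by
    have h2t : (0:ℝ) < 2 - t := by linarith
    rw [div_sub_div _ _ hV.ne' ht.ne', div_eq_div_iff (by positivity) h2t.ne']
    ring
  linarith


end Aux


theorem stmt_19 (x : ℝ) (hx : 0 < x) :
    StrictMonoOn (fun k : ℝ => x / Real.log (1 + x/k) - k) (Set.Ici 1) ∧
    (∀ k : ℝ, 1 ≤ k → (x / Real.log (1 + x/k) - k) ∈ Set.Ioo 0 x) ∧
    Tendsto (fun k : ℝ => x / Real.log (1 + x/k) - k) atTop (nhds (x/2)) := by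
  refine ⟨?_, ?_, ?_⟩
  · -- strict mono
    apply strictMonoOn_of_deriv_pos (convex_Ici 1)
    · intro k hk
      have hk0 : (0:ℝ) < k := lt_of_lt_of_le one_pos hk
      exact (aux_deriv x hx hk0).differentiableAt.continuousAt.continuousWithinAt
    · intro k hk
      rw [interior_Ici] at hk
      have hk0 : (0:ℝ) < k := lt_trans one_pos hk
      rw [(aux_deriv x hx hk0).deriv]
      have hkx : 0 < k + x := by linarith
      have hxk : 0 < x/k := div_pos hx hk0
      have hL : 0 < Real.log (1 + x/k) := Real.log_pos (by linarith)
      have hLeq : Real.log (1 + x/k) = Real.log (k+x) - Real.log k := by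
        rw [← Real.log_div hkx.ne' hk0.ne']
        congr 1
        field_simp
      have hlm := aux_logmean hk0 (show k < k + x by linarith)
      rw [show k + x - k = x by ring] at hlm
      rw [← hLeq] at hlm
      set L := Real.log (1 + x/k)
      set s := Real.sqrt (k * (k+x)) with hs
      have hs0 : 0 < s := Real.sqrt_pos.mpr (by positivity)
      have hs2 : s^2 = k * (k+x) := Real.sq_sqrt (by positivity)
      have hLs : L * s < x := by
        rw [div_eq_mul_inv] at hlm
        calc L * s < x / s * s := by
              apply mul_lt_mul_of_pos_right _ hs0
              rw [div_eq_mul_inv]; exact hlm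
          _ = x := by field_simp
      have hsq : L^2 * (k * (k+x)) < x^2 := by
        have := mul_lt_mul'' hLs hLs (by positivity) (by positivity)
        calc L^2 * (k*(k+x)) = (L*s) * (L*s) := by rw [← hs2]; ring
          _ < x * x := this
          _ = x^2 := by ring
      have hpos : 0 < k * (k+x) * L^2 := by positivity
      rw [sub_pos, lt_div_iff₀ hpos]
      nlinarith
  · -- range
    intro k hk
    have hk0 : (0:ℝ) < k := lt_of_lt_of_le one_pos hk
    have hkx : 0 < k + x := by linarith
    have hxk : 0 < x/k := div_pos hx hk0
    have h1 : (0:ℝ) < 1 + x/k := by linarith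
    have hL : 0 < Real.log (1 + x/k) := Real.log_pos (by linarith)
    have hup : Real.log (1 + x/k) < x/k := by
      have := Real.log_lt_sub_one_of_pos h1 (by linarith)
      linarith
    have hlow : x/(k+x) < Real.log (1 + x/k) := by
      have hinv : (0:ℝ) < (1 + x/k)⁻¹ := by positivity
      have key := Real.log_lt_sub_one_of_pos hinv (by
        intro h
        rw [inv_eq_one] at h
        linarith)
      rw [Real.log_inv] at key
      have heq : (1 + x/k)⁻¹ - 1 = -(x/(k+x)) := by
        rw [show (1:ℝ) + x/k = (k+x)/k by field_simp, inv_div]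
        rw [div_sub_one hkx.ne', ← neg_div]
        congr 1
        ring
      rw [heq] at key
      linarith
    rw [Set.mem_Ioo]
    constructor
    · have : k < x / Real.log (1 + x/k) := by
        have h := div_lt_div_of_pos_left hx hL hup
        rwa [div_div_cancel₀ hx.ne' ] at h
      linarith
    · have : x / Real.log (1 + x/k) < k + x := by
        have h := div_lt_div_of_pos_left hx (by positivity) hlow
        rwa [div_div_cancel₀ hx.ne'] at h
      linarith
  · -- limit
    have h0 : Tendsto (fun k : ℝ => x/k) atTop (nhds 0) := by
      simpa [div_eq_mul_inv] using tendsto_inv_atTop_zero.const_mul x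
    have hlow : Tendsto (fun k : ℝ => x * (1/2 - (x/k)/3) / (1 - (x/k)/2 + (x/k)^2/3))
        atTop (nhds (x/2)) := by
      have hnum : Tendsto (fun k : ℝ => x * (1/2 - (x/k)/3)) atTop (nhds (x * (1/2 - 0/3))) :=
        (tendsto_const_nhds.sub (h0.div_const 3)).const_mul x
      have hden : Tendsto (fun k : ℝ => 1 - (x/k)/2 + (x/k)^2/3) atTop
          (nhds (1 - 0/2 + 0^2/3)) :=
        (tendsto_const_nhds.sub (h0.div_const 2)).add ((h0.pow 2).div_const 3)
      have heq : x/2 = x * (1/2 - 0/3) / (1 - 0/2 + 0^2/3) := by ring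
      rw [heq]
      exact hnum.div hden (by norm_num)
    have hup : Tendsto (fun k : ℝ => x / (2 - x/k)) atTop (nhds (x/2)) := by
      have hden : Tendsto (fun k : ℝ => 2 - x/k) atTop (nhds (2 - 0)) :=
        tendsto_const_nhds.sub h0
      have heq : x/2 = x / (2 - 0) := by ring
      rw [heq]
      exact (tendsto_const_nhds : Tendsto (fun _ : ℝ => x) atTop (nhds x)).div hden (by norm_num)
    apply tendsto_of_tendsto_of_tendsto_of_le_of_le' hlow hup
    · filter_upwards [eventually_ge_atTop (max 1 x)] with k hk
      have hk1 : (1:ℝ) ≤ k := le_trans (le_max_left _ _) hk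
      have hk0 : (0:ℝ) < k := by linarith
      have ht : 0 < x/k := div_pos hx hk0
      have ht1 : x/k ≤ 1 := by
        rw [div_le_one hk0]
        exact le_trans (le_max_right _ _) hk
      have hxt : x / (x/k) = k := by
        rw [div_div_cancel₀ hx.ne']
      have := aux_tlow x hx ht ht1
      rw [hxt] at this
      exact this
    · filter_upwards [eventually_ge_atTop (max 1 x)] with k hk
      have hk1 : (1:ℝ) ≤ k := le_trans (le_max_left _ _) hk
      have hk0 : (0:ℝ) < k := by linarith
      have ht : 0 < x/k := div_pos hx hk0
      have ht1 : x/k ≤ 1 := by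
        rw [div_le_one hk0]
        exact le_trans (le_max_right _ _) hk
      have hxt : x / (x/k) = k := by
        rw [div_div_cancel₀ hx.ne']
      have := aux_tup x hx ht ht1
      rw [hxt] at this
      exact this
end
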